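/- For every integer d ≥ 1 there is a constant c depending only on d such that the following holds for every ε ∈ (0,1). Every finite graph G with VC dimension at most d admits a partition V(G) = V₁ ⊔ ⋯ ⊔ V_K with K ≤ 2^{2^{(1/ε)^c}} such that at least a (1−ε)-fraction of the pairs (x,y) ∈ V(G)² lie in an ε-homogeneous pair (V_i, V_j). -/

import Mathlib

open scoped Classical

def twr : ℕ → ℕ → ℕ
  | 0, x => x
  | n + 1, x => 2 ^ twr n x

def tower (n : ℕ) : ℕ := twr n 1

variable {V : Type}

noncomputable def bipDensity [DecidableEq V] (Z : Finset (V × V)) (X Y : Finset V) : ℝ :=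
  ((Z ∩ X ×ˢ Y).card : ℝ) / ((X.card : ℝ) * (Y.card : ℝ))

def funcQuasi (X Y : Finset V) (f : V → V → ℝ) (α : ℝ) : Prop :=
  ∑ x ∈ X, ∑ x' ∈ X, ∑ y ∈ Y, ∑ y' ∈ Y, f x y * f x' y * f x y' * f x' y'
    ≤ α * (X.card : ℝ) ^ 2 * (Y.card : ℝ) ^ 2

def bipQuasi [DecidableEq V] (Z : Finset (V × V)) (X Y : Finset V) (α : ℝ) : Prop :=
  funcQuasi X Y (fun x y => (if (x, y) ∈ Z then (1 : ℝ) else 0) - bipDensity Z X Y) α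

def triangles [DecidableEq V] (Z12 Z13 Z23 : Finset (V × V)) (Y1 Y2 Y3 : Finset V) :
    Finset (V × V × V) :=
  (Y1 ×ˢ Y2 ×ˢ Y3).filter fun p =>
    (p.1, p.2.1) ∈ Z12 ∧ (p.1, p.2.2) ∈ Z13 ∧ (p.2.1, p.2.2) ∈ Z23

noncomputable def relDensity [DecidableEq V] (H : V → V → V → Prop)
    (Z12 Z13 Z23 : Finset (V × V)) (Y1 Y2 Y3 : Finset V) : ℝ :=
  (((triangles Z12 Z13 Z23 Y1 Y2 Y3).filter fun p => H p.1 p.2.1 p.2.2).card : ℝ) /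
    ((triangles Z12 Z13 Z23 Y1 Y2 Y3).card : ℝ)

noncomputable def chainFn [DecidableEq V] (H : V → V → V → Prop)
    (Z12 Z13 Z23 : Finset (V × V)) (Y1 Y2 Y3 : Finset V) (x y z : V) : ℝ :=
  if (x, y, z) ∈ triangles Z12 Z13 Z23 Y1 Y2 Y3 then
    (if H x y z then (1 : ℝ) else 0) - relDensity H Z12 Z13 Z23 Y1 Y2 Y3
  else 0

def hQuasi [DecidableEq V] (H : V → V → V → Prop) (Z12 Z13 Z23 : Finset (V × V))
    (Y1 Y2 Y3 : Finset V) (η : ℝ) : Prop :=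
  ∑ x ∈ Y1, ∑ x' ∈ Y1, ∑ y ∈ Y2, ∑ y' ∈ Y2, ∑ z ∈ Y3, ∑ z' ∈ Y3,
      chainFn H Z12 Z13 Z23 Y1 Y2 Y3 x y z * chainFn H Z12 Z13 Z23 Y1 Y2 Y3 x y z' *
        chainFn H Z12 Z13 Z23 Y1 Y2 Y3 x y' z * chainFn H Z12 Z13 Z23 Y1 Y2 Y3 x y' z' *
        chainFn H Z12 Z13 Z23 Y1 Y2 Y3 x' y z * chainFn H Z12 Z13 Z23 Y1 Y2 Y3 x' y z' *
        chainFn H Z12 Z13 Z23 Y1 Y2 Y3 x' y' z * chainFn H Z12 Z13 Z23 Y1 Y2 Y3 x' y' z'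
    ≤ η * (bipDensity Z12 Y1 Y2 * bipDensity Z13 Y1 Y3 * bipDensity Z23 Y2 Y3) ^ 4 *
        (Y1.card : ℝ) ^ 2 * (Y2.card : ℝ) ^ 2 * (Y3.card : ℝ) ^ 2

noncomputable def triProdDensity [DecidableEq V] (Z12 Z13 Z23 : Finset (V × V))
    (Y1 Y2 Y3 : Finset V) : ℝ :=
  bipDensity Z12 Y1 Y2 * bipDensity Z13 Y1 Y3 * bipDensity Z23 Y2 Y3

def triGraphQuasi [DecidableEq V] (Z12 Z13 Z23 : Finset (V × V)) (Y1 Y2 Y3 : Finset V)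
    (α : ℝ) : Prop :=
  bipQuasi Z12 Y1 Y2 α ∧ bipQuasi Z13 Y1 Y3 α ∧ bipQuasi Z23 Y2 Y3 α

def triChainQuasi [DecidableEq V] (H : V → V → V → Prop) (Z12 Z13 Z23 : Finset (V × V))
    (Y1 Y2 Y3 : Finset V) (η : ℝ) (ψ : ℝ → ℝ) : Prop :=
  hQuasi H Z12 Z13 Z23 Y1 Y2 Y3 η ∧
    triGraphQuasi Z12 Z13 Z23 Y1 Y2 Y3 (ψ (triProdDensity Z12 Z13 Z23 Y1 Y2 Y3))

def IsPolyFn (ψ : ℝ → ℝ) : Prop :=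
  ∃ c : ℝ, ∃ k : ℕ, 0 < c ∧ 1 ≤ k ∧ ∀ x : ℝ, ψ x = c * x ^ k

def IsVertexPartition (P : Finset (Finset V)) (S : Finset V) : Prop :=
  (∀ Y ∈ P, Y ⊆ S) ∧ ∀ x ∈ S, ∃! Y, Y ∈ P ∧ x ∈ Y

def IsSubPartition [DecidableEq V] (P : Finset (Finset (V × V))) (E : Finset (V × V)) : Prop :=
  (∀ Z ∈ P, Z ⊆ E) ∧ ∀ e ∈ E, ∃! Z, Z ∈ P ∧ e ∈ Z

def IsBipPartition [DecidableEq V] (P : Finset (Finset (V × V))) (X Y : Finset V) : Prop :=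
  IsSubPartition P (X ×ˢ Y)

def Is3Graph (H : Finset (Finset V)) : Prop := ∀ e ∈ H, e.card = 3

def hPred [DecidableEq V] (H : Finset (Finset V)) (x y z : V) : Prop :=
  ({x, y, z} : Finset V) ∈ H

def HasShattered [DecidableEq V] (H : Finset (Finset V)) (d : ℕ) : Prop :=
  ∃ A B : Finset V, Disjoint A B ∧ A.card = d ∧ B.card = d ∧
    ∀ S ⊆ A ×ˢ B, ∃ v : V, ∀ a ∈ A, ∀ b ∈ B, (({a, b, v} : Finset V) ∈ H ↔ (a, b) ∈ S)

def VC2dimLE [DecidableEq V] (H : Finset (Finset V)) (d : ℕ) : Prop := ¬ HasShattered H (d + 1)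

def IsChainPartition [Fintype V] [DecidableEq V] (QV : Finset (Finset V))
    (QE : Finset V → Finset V → Finset (Finset (V × V))) : Prop :=
  IsVertexPartition QV Finset.univ ∧
    ∀ Y ∈ QV, ∀ Y' ∈ QV, Y ≠ Y' → IsBipPartition (QE Y Y') Y Y'

def IsCylPartition {t : ℕ} [DecidableEq V] (PV : Finset (Fin t → Finset V))
    (X : Fin t → Finset V) : Prop :=
  (∀ Y ∈ PV, ∀ i, Y i ⊆ X i) ∧
    ∀ x ∈ Fintype.piFinset X, ∃! Y, Y ∈ PV ∧ ∀ i, x i ∈ Y i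

def tGraphQuasi {t : ℕ} [DecidableEq V] (Z : Fin t → Fin t → Finset (V × V))
    (Y : Fin t → Finset V) (α : ℝ) : Prop :=
  ∀ i j : Fin t, i < j → bipQuasi (Z i j) (Y i) (Y j) α

noncomputable def prodDensity {t : ℕ} [DecidableEq V] (Z : Fin t → Fin t → Finset (V × V))
    (Y : Fin t → Finset V) : ℝ :=
  ∏ p ∈ Finset.univ.filter (fun p : Fin t × Fin t => p.1 < p.2),
    bipDensity (Z p.1 p.2) (Y p.1) (Y p.2)

def tChainQuasi {t : ℕ} [DecidableEq V] (H : V → V → V → Prop)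
    (Z : Fin t → Fin t → Finset (V × V)) (Y : Fin t → Finset V) (η : ℝ) (ψ : ℝ → ℝ) : Prop :=
  (∀ i j k : Fin t, i < j → j < k →
      hQuasi H (Z i j) (Z i k) (Z j k) (Y i) (Y j) (Y k) η) ∧
    tGraphQuasi Z Y (ψ (prodDensity Z Y))


/-- VC dimension of a graph is at most `d`. -/
def VCdimLE {V : Type} [Fintype V] [DecidableEq V] (G : SimpleGraph V) (d : ℕ) : Prop :=
  ∀ S : Finset V, (∀ T ⊆ S, ∃ v : V, S.filter (fun u => G.Adj v u) = T) → S.card ≤ d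

noncomputable def gDensity {V : Type} [DecidableEq V] (G : SimpleGraph V)
    (A B : Finset V) : ℝ :=
  (((A ×ˢ B).filter fun p => G.Adj p.1 p.2).card : ℝ) / ((A.card : ℝ) * (B.card : ℝ))


open scoped symmDiff

lemma auxProdCard {α β : Type*} [DecidableEq α] [DecidableEq β]
    (A : Finset α) (B : Finset β) (R : α → β → Prop) [∀ a b, Decidable (R a b)] :
    ((A ×ˢ B).filter fun p => R p.1 p.2).card = ∑ a ∈ A, (B.filter (R a)).card := by
  rw [Finset.card_eq_sum_card_fiberwise (f := Prod.fst) (t := A)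
    (fun p hp => (Finset.mem_product.1 (Finset.mem_filter.1 hp).1).1)]
  refine Finset.sum_congr rfl fun a ha => ?_
  have he : (((A ×ˢ B).filter fun p => R p.1 p.2).filter fun p => p.1 = a)
      = (B.filter (R a)).image (fun b => (a, b)) := by
    ext ⟨p1, p2⟩
    simp only [Finset.mem_filter, Finset.mem_product, Finset.mem_image]
    constructor
    · rintro ⟨⟨⟨_, h2⟩, h3⟩, rfl⟩
      exact ⟨p2, ⟨h2, h3⟩, rfl⟩
    · rintro ⟨b, ⟨hb, hr⟩, h⟩
      obtain ⟨rfl, rfl⟩ : a = p1 ∧ b = p2 := by simpa [Prod.ext_iff] using h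
      exact ⟨⟨⟨ha, hb⟩, hr⟩, rfl⟩
  rw [he, Finset.card_image_of_injective _ (fun b b' (h : (a, b) = (a, b')) => by simpa using h)]

lemma aux_pow_half {δ : ℝ} (h1 : δ ≤ 1) {j : ℕ} (hj : 1 ≤ δ * j) :
    (1 - δ) ^ j ≤ 1 / 2 := by
  have h2 : (1 - δ) ≤ Real.exp (-δ) := by
    have := Real.add_one_le_exp (-δ); linarith
  have he1 : (2:ℝ) ≤ Real.exp 1 := by have := Real.add_one_le_exp 1; linarith
  calc (1-δ)^j ≤ (Real.exp (-δ))^j := pow_le_pow_left₀ (by linarith) h2 j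
    _ = Real.exp (-δ * j) := by rw [← Real.exp_nat_mul]; ring_nf
    _ ≤ Real.exp (-1) := Real.exp_le_exp.2 (by linarith)
    _ ≤ 1/2 := by
        rw [Real.exp_neg]
        rw [inv_le_comm₀ (Real.exp_pos 1) (by norm_num)]
        linarith

lemma aux_sauer {V : Type} [DecidableEq V] (d : ℕ) (S : Finset V) (W : Finset (Finset V))
    (hW : ∀ B ∈ W.shatterer, B ⊆ S ∧ B.card ≤ d) :
    W.card ≤ (d + 1) * (S.card + 1) ^ d := by
  have h1 := Finset.card_le_card_shatterer W
  have h2 : W.shatterer ⊆ (Finset.range (d+1)).biUnion (fun i => S.powersetCard i) := by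
    intro B hB
    obtain ⟨hBS, hBd⟩ := hW B hB
    simp only [Finset.mem_biUnion, Finset.mem_range, Finset.mem_powersetCard]
    exact ⟨B.card, Nat.lt_succ_of_le hBd, hBS, rfl⟩
  have h3 : ((Finset.range (d+1)).biUnion (fun i => S.powersetCard i)).card
      ≤ ∑ i ∈ Finset.range (d+1), (S.powersetCard i).card := Finset.card_biUnion_le
  have h4 : ∀ i ∈ Finset.range (d+1), (S.powersetCard i).card ≤ (S.card + 1) ^ d := by
    intro i hi
    rw [Finset.card_powersetCard]
    calc S.card.choose i ≤ S.card ^ i := Nat.choose_le_pow _ _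
      _ ≤ (S.card + 1) ^ i := Nat.pow_le_pow_left (Nat.le_succ _) _
      _ ≤ (S.card + 1) ^ d := Nat.pow_le_pow_right (Nat.succ_pos _)
          (Nat.lt_succ_iff.1 (Finset.mem_range.1 hi))
  calc W.card ≤ W.shatterer.card := h1
    _ ≤ _ := Finset.card_le_card h2
    _ ≤ _ := h3
    _ ≤ ∑ _i ∈ Finset.range (d+1), (S.card + 1) ^ d := Finset.sum_le_sum h4
    _ = (d + 1) * (S.card + 1) ^ d := by
        rw [Finset.sum_const, Finset.card_range, smul_eq_mul]

lemma aux_poly (d t : ℕ) (hd : 1 ≤ d) (ht : 2 ^ (2 * d + 8) ≤ t) :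
    ((d : ℝ) + 1) * (9 * (t : ℝ) ^ 2) ^ d ≤ 2 ^ (t - 1) := by
  have hT256 : (256 : ℝ) * ((d:ℝ) + 1) ^ 2 ≤ (t : ℝ) := by
    have hnat : 256 * (d + 1) ^ 2 ≤ 2 ^ (2 * d + 8) := by
      have h1 : d + 1 ≤ 2 ^ d := Nat.lt_two_pow_self (n := d)
      calc 256 * (d+1)^2 ≤ 256 * (2^d)^2 := by
            exact Nat.mul_le_mul_left _ (Nat.pow_le_pow_left h1 2)
        _ = 2 ^ (2*d+8) := by ring
    exact_mod_cast le_trans (Nat.cast_le.2 hnat) (Nat.cast_le.2 ht)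
  set T : ℝ := (t : ℝ) with hTdef
  have hT0 : (0:ℝ) ≤ T := Nat.cast_nonneg t
  set s : ℝ := Real.sqrt T with hsdef
  have hs0 : 0 ≤ s := Real.sqrt_nonneg T
  have hsT : s ^ 2 = T := Real.sq_sqrt hT0
  have hs16 : 16 * ((d:ℝ) + 1) ≤ s := by
    have h1 : Real.sqrt (256 * ((d:ℝ)+1)^2) ≤ s := Real.sqrt_le_sqrt hT256
    rwa [show (256:ℝ) * ((d:ℝ)+1)^2 = (16*((d:ℝ)+1))^2 by ring,
      Real.sqrt_sq (by positivity)] at h1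
  have hs1 : (1:ℝ) ≤ s := by nlinarith [(Nat.cast_nonneg d : (0:ℝ) ≤ (d:ℝ))]
  have ht1 : 1 ≤ t := le_trans (Nat.one_le_two_pow : 1 ≤ 2^(2*d+8)) ht
  have hcast : ((t - 1 : ℕ) : ℝ) = T - 1 := by
    rw [Nat.cast_sub ht1]; norm_num; rfl
  -- bound LHS by exp(8 d s)
  have hd_exp : ((d:ℝ) + 1) ≤ Real.exp d := Real.add_one_le_exp d
  have h9 : (9:ℝ) ≤ Real.exp 3 := by
    have h1 : (2.7182818283 : ℝ) < Real.exp 1 := Real.exp_one_gt_d9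
    have : Real.exp 3 = Real.exp 1 * Real.exp 1 * Real.exp 1 := by
      rw [← Real.exp_add, ← Real.exp_add]; norm_num
    nlinarith
  have hs_exp : s ≤ Real.exp s := (Real.add_one_le_exp (s-1)).trans
    (Real.exp_le_exp.2 (by linarith)) |>.trans_eq' (by ring_nf)
  have hLHS : ((d : ℝ) + 1) * (9 * T ^ 2) ^ d ≤ Real.exp (8 * d * s) := by
    have hT2 : T ^ 2 = s ^ 4 := by rw [← hsT]; ring
    have h1 : (9 * T ^ 2) ^ d = 9 ^ d * (s ^ 4) ^ d := by rw [hT2, mul_pow]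
    have h2 : (9:ℝ) ^ d ≤ Real.exp 3 ^ d := pow_le_pow_left₀ (by norm_num) h9 d
    have h3 : (s ^ 4) ^ d ≤ (Real.exp s ^ 4) ^ d := by
      apply pow_le_pow_left₀ (by positivity)
      exact pow_le_pow_left₀ hs0 hs_exp 4
    calc ((d : ℝ) + 1) * (9 * T ^ 2) ^ d
        ≤ Real.exp d * (Real.exp 3 ^ d * (Real.exp s ^ 4) ^ d) := by
          rw [h1]
          apply mul_le_mul hd_exp _ (by positivity) (Real.exp_pos _).le
          exact mul_le_mul h2 h3 (by positivity) (by positivity)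
      _ = Real.exp (d + 3 * d + 4 * d * s) := by
          simp only [← Real.exp_nat_mul, ← Real.exp_add]
          congr 1
          push_cast
          ring
      _ ≤ Real.exp (8 * d * s) := by
          apply Real.exp_le_exp.2
          have hd1 : (1:ℝ) ≤ (d:ℝ) := by exact_mod_cast hd
          nlinarith
  -- bound RHS from below
  have hRHS : Real.exp ((T - 1) * Real.log 2) ≤ (2:ℝ) ^ (t - 1) := by
    rw [← hcast, Real.exp_nat_mul, Real.exp_log (by norm_num : (0:ℝ) < 2)]
  refine hLHS.trans (le_trans ?_ hRHS)
  apply Real.exp_le_exp.2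
  have hlog : (1/2 : ℝ) ≤ Real.log 2 := by
    have := Real.log_two_gt_d9; linarith
  have hTs : 16 * ((d:ℝ)+1) * s ≤ T := by
    rw [← hsT]; nlinarith
  have hd0 : (0:ℝ) ≤ (d:ℝ) := Nat.cast_nonneg d
  nlinarith

lemma aux_packing {V : Type} [Fintype V] [DecidableEq V] (G : SimpleGraph V) (d : ℕ)
    (hVC : VCdimLE G d) (δ : ℝ) (hδ0 : 0 < δ) (hδ1 : δ ≤ 1)
    (C : Finset V)
    (hsep : ∀ u ∈ C, ∀ v ∈ C, u ≠ v →
      δ * (Fintype.card V : ℝ) ≤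
        (((Finset.univ.filter (G.Adj u)) ∆ (Finset.univ.filter (G.Adj v))).card : ℝ))
    (t j : ℕ) (ht : 1 ≤ t) (hj : 1 ≤ δ * j)
    (hbig : 2 ^ (t - 1) < C.card) :
    2 ^ (t - 1) + 1 ≤ (d + 1) * (4 * t * j + 1) ^ d := by
  classical
  set n := Fintype.card V with hn
  set N : V → Finset V := fun v => Finset.univ.filter (G.Adj v) with hN
  set k := 4 * t * j with hk
  set M := 2 ^ (t - 1) + 1 with hM
  obtain ⟨C', hC'sub, hC'card⟩ := Finset.exists_subset_card_eq (Nat.succ_le_of_lt hbig)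
  have hC'ne : C'.Nonempty := Finset.card_pos.1 (by rw [hC'card]; positivity)
  have hn1 : 1 ≤ n := by
    obtain ⟨v₀, hv₀⟩ := hC'ne
    exact Fintype.card_pos_iff.2 ⟨v₀⟩
  set pairs := (C' ×ˢ C').filter (fun q => q.1 ≠ q.2) with hpairs
  set bad : V × V → Finset (Fin k → V) :=
    fun q => Fintype.piFinset fun _ => (N q.1 ∆ N q.2)ᶜ with hbad
  have hbadcard : ∀ q ∈ pairs, ((bad q).card : ℝ) ≤ ((1 - δ) * n) ^ k := by
    intro q hq
    simp only [hpairs, Finset.mem_filter, Finset.mem_product] at hq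
    obtain ⟨⟨h1, h2⟩, h3⟩ := hq
    have hsep' := hsep q.1 (hC'sub h1) q.2 (hC'sub h2) h3
    have hDle : (N q.1 ∆ N q.2).card ≤ n := Finset.card_le_univ _
    have hcard : (bad q).card = (n - (N q.1 ∆ N q.2).card) ^ k := by
      rw [hbad]
      simp only [Fintype.card_piFinset, Finset.card_compl, Finset.prod_const,
        Finset.card_univ, Fintype.card_fin]
      rfl
    rw [hcard]
    push_cast [Nat.cast_sub hDle]
    apply pow_le_pow_left₀ (sub_nonneg.2 (by exact_mod_cast hDle))
    have : (0:ℝ) ≤ (n:ℝ) := by positivity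
    nlinarith
  have htotal : ((Finset.univ : Finset (Fin k → V)).card : ℕ) = n ^ k := by
    rw [Finset.card_univ, Fintype.card_fun]
    simp [hn]
  have hM2t : (M : ℝ) ≤ 2 ^ t := by
    have h1 : (1:ℕ) ≤ 2 ^ (t-1) := Nat.one_le_two_pow
    have : M ≤ 2 ^ t := by
      rw [hM]
      calc 2 ^ (t-1) + 1 ≤ 2 ^ (t-1) + 2 ^ (t-1) := by omega
        _ = 2 ^ (t - 1 + 1) := by ring
        _ = 2 ^ t := by rw [Nat.sub_add_cancel ht]
    exact_mod_cast this
  have hδk : ((1:ℝ) - δ) ^ k ≤ (1/2) ^ (4 * t) := by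
    have : ((1:ℝ) - δ) ^ k = (((1:ℝ) - δ) ^ j) ^ (4 * t) := by
      rw [← pow_mul]; congr 1; rw [hk]; ring
    rw [this]
    exact pow_le_pow_left₀ (pow_nonneg (by linarith) j) (aux_pow_half hδ1 hj) _
  have hstrict : ((pairs.biUnion bad).card : ℝ) < ((n : ℝ)) ^ k := by
    have h1 : ((pairs.biUnion bad).card : ℝ) ≤ ∑ q ∈ pairs, ((bad q).card : ℝ) := by
      exact_mod_cast Finset.card_biUnion_le
    have h2 : ∑ q ∈ pairs, ((bad q).card : ℝ) ≤ (pairs.card : ℝ) * ((1 - δ) * n) ^ k := by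
      rw [← nsmul_eq_mul, ← Finset.sum_const]
      exact Finset.sum_le_sum hbadcard
    have h3 : (pairs.card : ℝ) ≤ (M : ℝ) * M := by
      have : pairs.card ≤ M * M := by
        calc pairs.card ≤ (C' ×ˢ C').card := Finset.card_filter_le _ _
          _ = M * M := by rw [Finset.card_product, hC'card]
      exact_mod_cast this
    have hnk : (0:ℝ) < (n:ℝ) ^ k := by positivity
    have h4 : ((1 - δ) * (n:ℝ)) ^ k = (1 - δ) ^ k * (n:ℝ) ^ k := mul_pow _ _ _
    have h5 : (M:ℝ) * M * ((1 - δ) * n) ^ k < (n:ℝ) ^ k := by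
      rw [h4, ← mul_assoc]
      have h6 : (M:ℝ) * M * (1 - δ) ^ k < 1 := by
        have h7 : (M:ℝ) * M * (1 - δ) ^ k ≤ (2:ℝ)^t * 2^t * (1/2)^(4*t) := by
          have hδk0 : (0:ℝ) ≤ (1 - δ) ^ k := pow_nonneg (by linarith) k
          have hM0 : (0:ℝ) ≤ (M:ℝ) := by positivity
          have := mul_le_mul (mul_le_mul hM2t hM2t hM0 (by positivity)) hδk
            hδk0 (by positivity)
          exact this
        have h8 : (2:ℝ)^t * 2^t * (1/2)^(4*t) ≤ (1/2)^(2*t) := by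
          have e1 : ((1:ℝ)/2)^(4*t) = 1 / 2^(4*t) := by rw [div_pow, one_pow]
          have e2 : ((1:ℝ)/2)^(2*t) = 1 / 2^(2*t) := by rw [div_pow, one_pow]
          rw [e1, e2, mul_one_div, div_le_div_iff₀ (by positivity) (by positivity)]
          apply le_of_eq
          rw [← pow_add, ← pow_add, one_mul]
          congr 1
          omega
        have h9 : ((1:ℝ)/2)^(2*t) < 1 := by
          apply pow_lt_one₀ (by norm_num) (by norm_num)
          omega
        linarith
      calc (M:ℝ) * M * (1 - δ) ^ k * (n:ℝ)^k < 1 * (n:ℝ)^k := by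
            apply mul_lt_mul_of_pos_right h6 hnk
        _ = (n:ℝ)^k := one_mul _
    calc ((pairs.biUnion bad).card : ℝ) ≤ (pairs.card : ℝ) * ((1 - δ) * n) ^ k :=
          le_trans h1 h2
      _ ≤ (M:ℝ) * M * ((1 - δ) * n) ^ k := by
          exact mul_le_mul_of_nonneg_right h3 (pow_nonneg (mul_nonneg (by linarith) (by positivity)) k)
      _ < (n:ℝ)^k := h5
  -- find a good sequence s
  have hnotsub : ¬ ((Finset.univ : Finset (Fin k → V)) ⊆ pairs.biUnion bad) := by
    intro hsub
    have := Finset.card_le_card hsub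
    rw [htotal] at this
    have : ((n:ℝ))^k ≤ ((pairs.biUnion bad).card : ℝ) := by exact_mod_cast this
    linarith
  obtain ⟨s, _, hsgood⟩ := Finset.not_subset.1 hnotsub
  have hgood : ∀ u ∈ C', ∀ v ∈ C', u ≠ v → ∃ i, s i ∈ N u ∆ N v := by
    intro u hu v hv huv
    have hmem : (u, v) ∈ pairs := by
      simp only [hpairs, Finset.mem_filter, Finset.mem_product]
      exact ⟨⟨hu, hv⟩, huv⟩
    have : s ∉ bad (u, v) := fun hb => hsgood (Finset.mem_biUnion.2 ⟨(u,v), hmem, hb⟩)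
    rw [hbad] at this
    simp only [Fintype.mem_piFinset, Finset.mem_compl] at this
    push_neg at this
    obtain ⟨i, hi⟩ := this
    exact ⟨i, hi⟩
  set S := Finset.image s Finset.univ with hS
  have hScard : S.card ≤ k := by
    calc S.card ≤ (Finset.univ : Finset (Fin k)).card := Finset.card_image_le
      _ = k := by simp
  set tr : V → Finset V := fun u => S.filter (fun x => G.Adj u x) with htr
  have hinj : Set.InjOn tr C' := by
    intro u hu v hv huvtr
    by_contra huv
    obtain ⟨i, hi⟩ := hgood u hu v hv huv
    have hiS : s i ∈ S := Finset.mem_image.2 ⟨i, Finset.mem_univ _, rfl⟩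
    rw [Finset.mem_symmDiff] at hi
    rcases hi with ⟨h1, h2⟩ | ⟨h1, h2⟩
    · have ha : G.Adj u (s i) := (Finset.mem_filter.1 h1).2
      have hb : ¬ G.Adj v (s i) := fun h => h2 (Finset.mem_filter.2 ⟨Finset.mem_univ _, h⟩)
      have : s i ∈ tr u := Finset.mem_filter.2 ⟨hiS, ha⟩
      rw [huvtr] at this
      exact hb (Finset.mem_filter.1 this).2
    · have ha : G.Adj v (s i) := (Finset.mem_filter.1 h1).2
      have hb : ¬ G.Adj u (s i) := fun h => h2 (Finset.mem_filter.2 ⟨Finset.mem_univ _, h⟩)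
      have : s i ∈ tr v := Finset.mem_filter.2 ⟨hiS, ha⟩
      rw [← huvtr] at this
      exact hb (Finset.mem_filter.1 this).2
  set W := C'.image tr with hW
  have hWcard : W.card = M := by rw [hW, Finset.card_image_of_injOn hinj, hC'card]
  have hshatW : ∀ B ∈ W.shatterer, B ⊆ S ∧ B.card ≤ d := by
    intro B hB
    rw [Finset.mem_shatterer] at hB
    constructor
    · obtain ⟨T, hT, hBT⟩ := hB.exists_superset
      obtain ⟨u, _, rfl⟩ := Finset.mem_image.1 hT
      exact hBT.trans (Finset.filter_subset _ _)
    · apply hVC B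
      intro T' hT'
      obtain ⟨U, hU, hBU⟩ := hB hT'
      obtain ⟨u, _, rfl⟩ := Finset.mem_image.1 hU
      refine ⟨u, ?_⟩
      rw [← hBU]
      have hBS : B ⊆ S := by
        obtain ⟨T, hT, hBT⟩ := hB.exists_superset
        obtain ⟨w, _, rfl⟩ := Finset.mem_image.1 hT
        exact hBT.trans (Finset.filter_subset _ _)
      ext x
      simp only [Finset.mem_filter, Finset.mem_inter, htr]
      constructor
      · rintro ⟨hx1, hx2⟩
        exact ⟨hx1, hBS hx1, hx2⟩
      · rintro ⟨hx1, hx2, hx3⟩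
        exact ⟨hx1, hx3⟩
  have := aux_sauer d S W hshatW
  rw [hWcard] at this
  calc M ≤ (d + 1) * (S.card + 1) ^ d := this
    _ ≤ (d + 1) * (k + 1) ^ d := by
        apply Nat.mul_le_mul_left
        exact Nat.pow_le_pow_left (by omega) _


set_option maxHeartbeats 2000000 in
/-- Ultra-strong regularity with double-exponentially many parts for graphs of
bounded VC dimension. -/
theorem graph_double_exp (d : ℕ) (hd : 1 ≤ d) :
    ∃ c : ℕ, ∀ ε : ℝ, 0 < ε → ε < 1 →
      ∀ (V : Type) [Fintype V] [DecidableEq V] (G : SimpleGraph V),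
        VCdimLE G d →
        ∃ P : Finset (Finset V), IsVertexPartition P Finset.univ ∧
          ((P.card : ℝ) ≤ (2 : ℝ) ^ ((2 : ℝ) ^ (ε⁻¹ ^ c))) ∧
          (1 - ε) * ((Fintype.card V : ℝ)) ^ 2 ≤
            (((Finset.univ : Finset (V × V)).filter fun p =>
              ∀ A ∈ P, ∀ B ∈ P, p.1 ∈ A → p.2 ∈ B →
                (gDensity G A B ≤ ε ∨ 1 - ε ≤ gDensity G A B)).card : ℝ) := by
  refine ⟨2 * d + 8, ?_⟩
  intro ε hε0 hε1 V _ _ G hVC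
  set c := 2 * d + 8 with hc
  have hεinv1 : (1:ℝ) < ε⁻¹ := (one_lt_inv₀ hε0).2 hε1
  have hx1 : (1:ℝ) ≤ ε⁻¹ ^ c := one_le_pow₀ hεinv1.le
  have hx0 : (0:ℝ) ≤ ε⁻¹ ^ c := by linarith
  have hBone : (1:ℝ) ≤ (2 : ℝ) ^ ((2 : ℝ) ^ (ε⁻¹ ^ c)) := by
    have h1 : (0:ℝ) ≤ (2:ℝ) ^ (ε⁻¹ ^ c) := Real.rpow_nonneg (by norm_num) _
    calc (1:ℝ) = (2:ℝ) ^ (0:ℝ) := (Real.rpow_zero 2).symm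
      _ ≤ (2:ℝ) ^ ((2 : ℝ) ^ (ε⁻¹ ^ c)) :=
          Real.rpow_le_rpow_of_exponent_le one_le_two h1
  by_cases hhalf : 1/2 ≤ ε
  · -- trivial partition for large ε
    refine ⟨{Finset.univ}, ⟨?_, ?_⟩, ?_, ?_⟩
    · intro Y hY
      rw [Finset.mem_singleton] at hY
      exact hY ▸ le_refl _
    · intro x _
      refine ⟨Finset.univ, ⟨Finset.mem_singleton_self _, Finset.mem_univ _⟩, ?_⟩
      rintro Y ⟨hY, _⟩
      exact Finset.mem_singleton.1 hY
    · simpa using hBone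
    · have hfil : (Finset.univ : Finset (V × V)).filter (fun p =>
          ∀ A ∈ ({Finset.univ} : Finset (Finset V)), ∀ B ∈ ({Finset.univ} : Finset (Finset V)),
            p.1 ∈ A → p.2 ∈ B → (gDensity G A B ≤ ε ∨ 1 - ε ≤ gDensity G A B))
          = Finset.univ := by
        apply Finset.filter_true_of_mem
        intro p _ A hA B hB _ _
        by_cases hle : gDensity G A B ≤ ε
        · exact Or.inl hle
        · refine Or.inr (le_trans (by linarith) (not_le.1 hle).le)
      rw [hfil, Finset.card_univ, Fintype.card_prod]
      have h0 : (0:ℝ) ≤ (Fintype.card V : ℝ) := Nat.cast_nonneg _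
      push_cast
      nlinarith
  · push_neg at hhalf
    set n := Fintype.card V with hn
    by_cases hn0 : n = 0
    · -- empty vertex set
      haveI : IsEmpty V := Fintype.card_eq_zero_iff.1 hn0
      refine ⟨∅, ⟨fun Y hY => absurd hY (Finset.notMem_empty _), fun x _ => (IsEmpty.false x).elim⟩, ?_, ?_⟩
      · simpa using hBone.trans' (by norm_num)
      · rw [hn0]
        simp
    have hn1 : 1 ≤ n := Nat.one_le_iff_ne_zero.2 hn0
    have hnR : (1:ℝ) ≤ (n:ℝ) := by exact_mod_cast hn1
    set δ := ε ^ 2 with hδ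
    have hδ0 : 0 < δ := by positivity
    have hδ1 : δ ≤ 1 := by nlinarith
    set N : V → Finset V := fun v => Finset.univ.filter (G.Adj v) with hN
    -- maximal δn-separated set C
    set Fam := Finset.univ.powerset.filter
      (fun s : Finset V => ∀ u ∈ s, ∀ v ∈ s, u ≠ v → δ * n ≤ ((N u ∆ N v).card : ℝ)) with hFam
    have hFamne : Fam.Nonempty := by
      refine ⟨∅, Finset.mem_filter.2 ⟨Finset.mem_powerset.2 (Finset.empty_subset _), ?_⟩⟩
      intro u hu
      exact absurd hu (Finset.notMem_empty _)
    obtain ⟨C, hCmem, hCmax⟩ := Finset.exists_max_image Fam Finset.card hFamne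
    have hCsep : ∀ u ∈ C, ∀ v ∈ C, u ≠ v → δ * n ≤ ((N u ∆ N v).card : ℝ) :=
      (Finset.mem_filter.1 hCmem).2
    have hδn0 : (0:ℝ) < δ * n := mul_pos hδ0 (by linarith)
    have hcover : ∀ v : V, ∃ u ∈ C, ((N v ∆ N u).card : ℝ) < δ * n := by
      intro v
      by_contra hcon
      push_neg at hcon
      have hvC : v ∉ C := by
        intro hv
        have := hcon v hv
        rw [symmDiff_self] at this
        simp only [Finset.bot_eq_empty, Finset.card_empty, Nat.cast_zero] at this
        linarith
      have hins : insert v C ∈ Fam := by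
        refine Finset.mem_filter.2 ⟨Finset.mem_powerset.2 (Finset.subset_univ _), ?_⟩
        intro a ha b hb hab
        rcases Finset.mem_insert.1 ha with rfl | ha'
        · rcases Finset.mem_insert.1 hb with rfl | hb'
          · exact absurd rfl hab
          · exact hcon b hb'
        · rcases Finset.mem_insert.1 hb with rfl | hb'
          · rw [symmDiff_comm]; exact hcon a ha'
          · exact hCsep a ha' b hb' hab
      have := hCmax _ hins
      rw [Finset.card_insert_of_notMem hvC] at this
      omega
    choose cF hcF1 hcF2 using hcover
    -- the partition by (center, trace on C)
    set key : V → V × Finset V := fun v => (cF v, C.filter (fun u => G.Adj u v)) with hkey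
    set Ks := Finset.univ.image key with hKs
    set part : V × Finset V → Finset V := fun κ => Finset.univ.filter (fun w => key w = κ)
      with hpart
    set P := Ks.image part with hP
    have hmemKs : ∀ v : V, key v ∈ Ks := fun v => Finset.mem_image.2 ⟨v, Finset.mem_univ _, rfl⟩
    have hmempart : ∀ v : V, v ∈ part (key v) :=
      fun v => Finset.mem_filter.2 ⟨Finset.mem_univ _, rfl⟩
    have hkeyeq : ∀ (κ) (v : V), v ∈ part κ → key v = κ := fun κ v hv =>
      (Finset.mem_filter.1 hv).2
    -- partition property
    have hPart : IsVertexPartition P Finset.univ := by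
      constructor
      · intro Y _
        exact Finset.subset_univ Y
      · intro x _
        refine ⟨part (key x), ⟨Finset.mem_image.2 ⟨key x, hmemKs x, rfl⟩, hmempart x⟩, ?_⟩
        rintro Y ⟨hY, hxY⟩
        obtain ⟨κ, _, rfl⟩ := Finset.mem_image.1 hY
        rw [hkeyeq κ x hxY]
    -- bound on size of C
    set t := ⌊ε⁻¹ ^ c⌋₊ with hT
    have h2ε : (2:ℝ) ≤ ε⁻¹ := by
      have : (2:ℝ) ≤ 1/ε := (le_div_iff₀ hε0).2 (by linarith)
      simpa [one_div] using this
    have ht2c : 2 ^ c ≤ t := by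
      apply Nat.le_floor
      push_cast
      exact pow_le_pow_left₀ (by norm_num) h2ε c
    have ht1 : 1 ≤ t := le_trans (Nat.one_le_two_pow) ht2c
    set j := ⌈δ⁻¹⌉₊ with hj
    have hjδ : 1 ≤ δ * j := by
      have h1 : δ⁻¹ ≤ (j:ℝ) := Nat.le_ceil _
      calc (1:ℝ) = δ * δ⁻¹ := (mul_inv_cancel₀ hδ0.ne').symm
        _ ≤ δ * j := by
            exact mul_le_mul_of_nonneg_left h1 hδ0.le
    have hjt : j ≤ 2 * t := by
      have h1 : j ≤ ⌊δ⁻¹⌋₊ + 1 := Nat.ceil_le_floor_add_one _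
      have h2 : δ⁻¹ ≤ ε⁻¹ ^ c := by
        rw [hδ, ← inv_pow]
        exact pow_le_pow_right₀ hεinv1.le (by omega)
      have h3 : ⌊δ⁻¹⌋₊ ≤ t := Nat.floor_le_floor h2
      omega
    have hm : C.card ≤ 2 ^ (t - 1) := by
      by_contra hbig
      push_neg at hbig
      have hp := aux_packing G d hVC δ hδ0 hδ1 C hCsep t j ht1 hjδ hbig
      have hk9 : 4 * t * j + 1 ≤ 9 * t ^ 2 := by nlinarith
      have hnat2 : (d + 1) * (4 * t * j + 1) ^ d ≤ (d + 1) * (9 * t ^ 2) ^ d :=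
        Nat.mul_le_mul_left _ (Nat.pow_le_pow_left hk9 _)
      have hr : (d + 1) * (9 * t ^ 2) ^ d ≤ 2 ^ (t - 1) := by
        have := aux_poly d t hd ht2c
        have hcast : (((d + 1) * (9 * t ^ 2) ^ d : ℕ) : ℝ) ≤ (((2:ℕ) ^ (t - 1) : ℕ) : ℝ) := by
          push_cast
          exact this
        exact_mod_cast hcast
      omega
    -- cardinality of the partition
    have hPcard : (P.card : ℝ) ≤ (2 : ℝ) ^ ((2 : ℝ) ^ (ε⁻¹ ^ c)) := by
      have h1 : P.card ≤ Ks.card := Finset.card_image_le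
      have h2 : Ks ⊆ C ×ˢ C.powerset := by
        intro κ hκ
        obtain ⟨v, _, rfl⟩ := Finset.mem_image.1 hκ
        exact Finset.mem_product.2 ⟨hcF1 v, Finset.mem_powerset.2 (Finset.filter_subset _ _)⟩
      have h3 : Ks.card ≤ C.card * 2 ^ C.card := by
        calc Ks.card ≤ (C ×ˢ C.powerset).card := Finset.card_le_card h2
          _ = C.card * 2 ^ C.card := by rw [Finset.card_product, Finset.card_powerset]
      set m := C.card with hmdef
      have h4 : m * 2 ^ m ≤ 2 ^ (2 ^ t) := by
        calc m * 2 ^ m ≤ 2 ^ m * 2 ^ m := Nat.mul_le_mul_right _ (Nat.lt_two_pow_self (n := m)).le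
          _ = 2 ^ (m + m) := (pow_add 2 m m).symm
          _ ≤ 2 ^ (2 ^ (t-1) + 2 ^ (t-1)) := Nat.pow_le_pow_right (by norm_num) (by omega)
          _ = 2 ^ (2 ^ t) := by
              congr 1
              have : 2 ^ (t - 1) + 2 ^ (t - 1) = 2 ^ (t - 1 + 1) := by ring
              rw [this, Nat.sub_add_cancel ht1]
      have h5 : (P.card : ℝ) ≤ ((2 ^ (2 ^ t) : ℕ) : ℝ) := by
        exact_mod_cast le_trans h1 (le_trans h3 h4)
      refine h5.trans ?_
      have h6 : ((2 ^ (2 ^ t) : ℕ) : ℝ) = (2:ℝ) ^ (((2:ℕ) ^ t : ℕ) : ℝ) := by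
        rw [Real.rpow_natCast]
        push_cast
        rfl
      rw [h6]
      apply Real.rpow_le_rpow_of_exponent_le one_le_two
      have h7 : (((2:ℕ) ^ t : ℕ) : ℝ) = (2:ℝ) ^ ((t:ℕ) : ℝ) := by
        rw [Real.rpow_natCast]
        push_cast
        rfl
      rw [h7]
      apply Real.rpow_le_rpow_of_exponent_le one_le_two
      exact Nat.floor_le hx0
    refine ⟨P, hPart, hPcard, ?_⟩
    -- the counting argument
    set Hom : Finset V → Finset V → Prop :=
      fun A B => gDensity G A B ≤ ε ∨ 1 - ε ≤ gDensity G A B with hHom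
    have hiff : ∀ p : V × V,
        (∀ A ∈ P, ∀ B ∈ P, p.1 ∈ A → p.2 ∈ B → Hom A B) ↔
          Hom (part (key p.1)) (part (key p.2)) := by
      intro p
      constructor
      · intro h
        exact h _ (Finset.mem_image.2 ⟨key p.1, hmemKs p.1, rfl⟩)
          _ (Finset.mem_image.2 ⟨key p.2, hmemKs p.2, rfl⟩) (hmempart p.1) (hmempart p.2)
      · intro h A hA B hB h1 h2
        obtain ⟨κ, _, rfl⟩ := Finset.mem_image.1 hA
        obtain ⟨lam, _, rfl⟩ := Finset.mem_image.1 hB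
        rw [← hkeyeq κ p.1 h1, ← hkeyeq lam p.2 h2]
        exact h
    set KK := (Ks ×ˢ Ks).filter (fun q => ¬ Hom (part q.1) (part q.2)) with hKK
    set NH := Finset.univ.filter
      (fun p : V × V => ¬ Hom (part (key p.1)) (part (key p.2))) with hNH
    have hmaps : ∀ p ∈ NH, (key p.1, key p.2) ∈ KK := by
      intro p hp
      refine Finset.mem_filter.2 ⟨Finset.mem_product.2 ⟨hmemKs p.1, hmemKs p.2⟩, ?_⟩
      exact (Finset.mem_filter.1 hp).2
    have hfib : ∀ q ∈ KK, (NH.filter (fun p => (key p.1, key p.2) = q))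
        = part q.1 ×ˢ part q.2 := by
      intro q hq
      have hqn : ¬ Hom (part q.1) (part q.2) := (Finset.mem_filter.1 hq).2
      ext p
      constructor
      · intro hp
        obtain ⟨hp1, hp2⟩ := Finset.mem_filter.1 hp
        have k1 : key p.1 = q.1 := congrArg Prod.fst hp2
        have k2 : key p.2 = q.2 := congrArg Prod.snd hp2
        exact Finset.mem_product.2 ⟨Finset.mem_filter.2 ⟨Finset.mem_univ _, k1⟩,
          Finset.mem_filter.2 ⟨Finset.mem_univ _, k2⟩⟩
      · intro hp
        obtain ⟨hp1, hp2⟩ := Finset.mem_product.1 hp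
        have k1 : key p.1 = q.1 := (Finset.mem_filter.1 hp1).2
        have k2 : key p.2 = q.2 := (Finset.mem_filter.1 hp2).2
        refine Finset.mem_filter.2 ⟨Finset.mem_filter.2 ⟨Finset.mem_univ _, ?_⟩, ?_⟩
        · rw [k1, k2]
          exact hqn
        · exact Prod.ext k1 k2
    have hcountN : NH.card = ∑ q ∈ KK, (part q.1).card * (part q.2).card := by
      rw [Finset.card_eq_sum_card_fiberwise hmaps]
      refine Finset.sum_congr rfl fun q hq => ?_
      rw [hfib q hq, Finset.card_product]
    -- per-pair bound
    have hbadpair : ∀ q ∈ KK,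
        ε * (((part q.1).card : ℝ) * ((part q.2).card : ℝ))
          ≤ ∑ a ∈ part q.1, (((N a ∆ N (cF a)) ∩ part q.2).card : ℝ) := by
      intro q hq
      obtain ⟨hqKs, hqn⟩ := Finset.mem_filter.1 hq
      obtain ⟨hq1, hq2⟩ := Finset.mem_product.1 hqKs
      obtain ⟨a₀, _, ha₀⟩ := Finset.mem_image.1 hq1
      obtain ⟨b₀, _, hb₀⟩ := Finset.mem_image.1 hq2
      set A := part q.1 with hA
      set B := part q.2 with hB
      have ha₀A : a₀ ∈ A := by rw [hA, ← ha₀]; exact hmempart a₀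
      have hb₀B : b₀ ∈ B := by rw [hB, ← hb₀]; exact hmempart b₀
      have hA0 : (0:ℝ) < (A.card : ℝ) := by
        exact_mod_cast Finset.card_pos.2 ⟨a₀, ha₀A⟩
      have hB0 : (0:ℝ) < (B.card : ℝ) := by
        exact_mod_cast Finset.card_pos.2 ⟨b₀, hb₀B⟩
      set w := cF a₀ with hw
      have hwC : w ∈ C := hcF1 a₀
      have hcFa : ∀ a ∈ A, cF a = w := by
        intro a ha
        have := hkeyeq q.1 a ha
        rw [← ha₀] at this
        exact congrArg Prod.fst this
      have hBtr : ∀ b ∈ B, (G.Adj w b ↔ w ∈ q.2.2) := by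
        intro b hb
        have hkb := hkeyeq q.2 b hb
        have : C.filter (fun u => G.Adj u b) = q.2.2 := congrArg Prod.snd hkb
        rw [← this, Finset.mem_filter]
        exact ⟨fun h => ⟨hwC, h⟩, fun h => h.2⟩
      simp only [hHom] at hqn
      push_neg at hqn
      obtain ⟨hlo, hhi⟩ := hqn
      have hgd : gDensity G A B
          = ((((A ×ˢ B).filter fun p => G.Adj p.1 p.2).card : ℝ))
            / ((A.card : ℝ) * (B.card : ℝ)) := rfl
      set e := ((A ×ˢ B).filter fun p => G.Adj p.1 p.2).card with he
      have hR : (0:ℝ) < (A.card : ℝ) * (B.card : ℝ) := mul_pos hA0 hB0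
      have hlo' : ε * ((A.card:ℝ) * (B.card:ℝ)) < (e:ℝ) := by
        rw [hgd, lt_div_iff₀ hR] at hlo
        linarith
      have hhi' : (e:ℝ) < (1 - ε) * ((A.card:ℝ) * (B.card:ℝ)) := by
        rw [hgd, div_lt_iff₀ hR] at hhi
        linarith
      have hsum : e = ∑ a ∈ A, (B.filter (G.Adj a)).card := auxProdCard A B G.Adj
      have hgoal' : ∑ a ∈ A, (((N a ∆ N (cF a)) ∩ B).card : ℝ)
          = ∑ a ∈ A, (((N a ∆ N w) ∩ B).card : ℝ) :=
        Finset.sum_congr rfl fun a ha => by rw [hcFa a ha]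
      rw [hgoal']
      by_cases hwB : w ∈ q.2.2
      · have hle : ∀ a ∈ A, B.card ≤ (B.filter (G.Adj a)).card + ((N a ∆ N w) ∩ B).card := by
          intro a _
          have hsub : B ⊆ (B.filter (G.Adj a)) ∪ ((N a ∆ N w) ∩ B) := by
            intro b hb
            by_cases hab : G.Adj a b
            · exact Finset.mem_union_left _ (Finset.mem_filter.2 ⟨hb, hab⟩)
            · refine Finset.mem_union_right _ (Finset.mem_inter.2 ⟨?_, hb⟩)
              rw [Finset.mem_symmDiff]
              refine Or.inr ⟨?_, ?_⟩
              · exact Finset.mem_filter.2 ⟨Finset.mem_univ _, (hBtr b hb).2 hwB⟩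
              · intro hmem
                exact hab (Finset.mem_filter.1 hmem).2
          calc B.card ≤ ((B.filter (G.Adj a)) ∪ ((N a ∆ N w) ∩ B)).card :=
                Finset.card_le_card hsub
            _ ≤ _ := Finset.card_union_le _ _
        have hsum2 : A.card * B.card ≤ e + ∑ a ∈ A, ((N a ∆ N w) ∩ B).card := by
          rw [hsum, ← Finset.sum_add_distrib]
          calc A.card * B.card = ∑ _a ∈ A, B.card := by
                rw [Finset.sum_const, smul_eq_mul]
            _ ≤ _ := Finset.sum_le_sum hle
        have hsum2' : (A.card:ℝ) * (B.card:ℝ)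
            ≤ (e:ℝ) + ∑ a ∈ A, (((N a ∆ N w) ∩ B).card : ℝ) := by
          exact_mod_cast hsum2
        linarith
      · have hle : ∀ a ∈ A, (B.filter (G.Adj a)).card ≤ ((N a ∆ N w) ∩ B).card := by
          intro a _
          apply Finset.card_le_card
          intro b hb
          obtain ⟨hbB, hab⟩ := Finset.mem_filter.1 hb
          refine Finset.mem_inter.2 ⟨?_, hbB⟩
          rw [Finset.mem_symmDiff]
          refine Or.inl ⟨Finset.mem_filter.2 ⟨Finset.mem_univ _, hab⟩, ?_⟩
          intro hmem
          exact hwB ((hBtr b hbB).1 (Finset.mem_filter.1 hmem).2)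
        have hsum2 : e ≤ ∑ a ∈ A, ((N a ∆ N w) ∩ B).card := by
          rw [hsum]
          exact Finset.sum_le_sum hle
        have hsum2' : (e:ℝ) ≤ ∑ a ∈ A, (((N a ∆ N w) ∩ B).card : ℝ) := by
          exact_mod_cast hsum2
        linarith
    -- total bad-pair mass is small
    have hNHle : (NH.card : ℝ) ≤ ε * (n:ℝ) * (n:ℝ) := by
      have hb1 : ε * (NH.card : ℝ)
          ≤ ∑ q ∈ KK, ∑ a ∈ part q.1, (((N a ∆ N (cF a)) ∩ part q.2).card : ℝ) := by
        rw [hcountN]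
        push_cast
        rw [Finset.mul_sum]
        exact Finset.sum_le_sum hbadpair
      have hfull : ∑ q ∈ Ks ×ˢ Ks, ∑ a ∈ part q.1, (((N a ∆ N (cF a)) ∩ part q.2).card : ℝ)
          = ∑ a : V, ((N a ∆ N (cF a)).card : ℝ) := by
        rw [Finset.sum_product]
        have hswap : ∀ κ, ∑ lam ∈ Ks, ∑ a ∈ part κ, (((N a ∆ N (cF a)) ∩ part lam).card : ℝ)
            = ∑ a ∈ part κ, ∑ lam ∈ Ks, (((N a ∆ N (cF a)) ∩ part lam).card : ℝ) :=
          fun κ => Finset.sum_comm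
        rw [Finset.sum_congr rfl (fun κ _ => hswap κ)]
        have hinner : ∀ a : V, ∑ lam ∈ Ks, (((N a ∆ N (cF a)) ∩ part lam).card : ℝ)
            = ((N a ∆ N (cF a)).card : ℝ) := by
          intro a
          have hnat : ∑ lam ∈ Ks, ((N a ∆ N (cF a)) ∩ part lam).card
              = (N a ∆ N (cF a)).card := by
            rw [Finset.card_eq_sum_card_fiberwise
              (f := key) (t := Ks) (s := N a ∆ N (cF a)) (fun x _ => hmemKs x)]
            refine Finset.sum_congr rfl fun lam _ => ?_
            congr 1
            ext x
            simp only [Finset.mem_inter, Finset.mem_filter, hpart, Finset.mem_univ, true_and]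
          exact_mod_cast congrArg (Nat.cast : ℕ → ℝ) hnat
        rw [Finset.sum_congr rfl (fun κ _ => Finset.sum_congr rfl (fun a _ => hinner a))]
        exact Finset.sum_fiberwise_of_maps_to (fun x _ => hmemKs x) _
      have hmono : ∑ q ∈ KK, ∑ a ∈ part q.1, (((N a ∆ N (cF a)) ∩ part q.2).card : ℝ)
          ≤ ∑ q ∈ Ks ×ˢ Ks, ∑ a ∈ part q.1, (((N a ∆ N (cF a)) ∩ part q.2).card : ℝ) :=
        Finset.sum_le_sum_of_subset_of_nonneg (Finset.filter_subset _ _)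
          (fun q _ _ => Finset.sum_nonneg fun a _ => Nat.cast_nonneg _)
      have hbound : ∑ a : V, ((N a ∆ N (cF a)).card : ℝ) ≤ (n:ℝ) * (δ * (n:ℝ)) := by
        calc ∑ a : V, ((N a ∆ N (cF a)).card : ℝ) ≤ ∑ _a : V, (δ * (n:ℝ)) :=
              Finset.sum_le_sum fun a _ => (hcF2 a).le
          _ = (n:ℝ) * (δ * (n:ℝ)) := by
              rw [Finset.sum_const, Finset.card_univ, nsmul_eq_mul]
      have hchain : ε * (NH.card : ℝ) ≤ δ * (n:ℝ) * (n:ℝ) := by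
        calc ε * (NH.card : ℝ) ≤ _ := hb1
          _ ≤ _ := hmono
          _ = ∑ a : V, ((N a ∆ N (cF a)).card : ℝ) := hfull
          _ ≤ (n:ℝ) * (δ * (n:ℝ)) := hbound
          _ = δ * (n:ℝ) * (n:ℝ) := by ring
      have hδε : δ * (n:ℝ) * (n:ℝ) = ε * (ε * (n:ℝ) * (n:ℝ)) := by
        rw [hδ]; ring
      rw [hδε] at hchain
      exact (mul_le_mul_iff_right₀ hε0).1 hchain
    -- final assembly
    have hfilter_eq : ((Finset.univ : Finset (V × V)).filter fun p =>
          ∀ A ∈ P, ∀ B ∈ P, p.1 ∈ A → p.2 ∈ B →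
            (gDensity G A B ≤ ε ∨ 1 - ε ≤ gDensity G A B))
        = Finset.univ.filter (fun p : V × V => Hom (part (key p.1)) (part (key p.2))) := by
      apply Finset.filter_congr
      intro p _
      exact hiff p
    have hsplit : (Finset.univ.filter
          (fun p : V × V => Hom (part (key p.1)) (part (key p.2)))).card + NH.card = n * n := by
      rw [hNH, Finset.card_filter_add_card_filter_not, Finset.card_univ,
        Fintype.card_prod]
    rw [hfilter_eq]
    have hcast : ((Finset.univ.filter
        (fun p : V × V => Hom (part (key p.1)) (part (key p.2)))).card : ℝ)
        = (n:ℝ) * (n:ℝ) - (NH.card : ℝ) := by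
      have : (((Finset.univ.filter
          (fun p : V × V => Hom (part (key p.1)) (part (key p.2)))).card + NH.card : ℕ) : ℝ)
          = ((n * n : ℕ) : ℝ) := by exact_mod_cast congrArg (Nat.cast : ℕ → ℝ) hsplit
      push_cast at this
      linarith
    rw [hcast]
    have hε1' : (0:ℝ) ≤ 1 - ε := by linarith
    nlinarith [hNHle, sq_nonneg ((n:ℝ))]
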